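/- Fix x ∈ ℝ and let u : ℝ → ℝ be locally absolutely continuous on [x,∞) with derivative u′ satisfying ∫_0^∞ |u′(x+y)| μ̄(y) dy < ∞, where μ̄(z) = μ((z,∞)). Then the left Marchaud-type derivative coincides with the Caputo-type (Riemann–Liouville-type) expression: D⁻_μ u(x) = −∫_0^∞ u′(x+y) μ̄(y) dy, i.e. ∫_0^∞ (u(x) − u(x+z)) dμ(z) = −∫_x^∞ u′(y) μ̄(y−x) dy. -/

import Mathlib

open MeasureTheory Real Set Filter Topology

/-- For `u` locally absolutely continuous on `[x,∞)` (here: differentiable with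
derivative `u'`) with `∫_0^∞ |u'(x+y)| μ̄(y) dy < ∞`, where `μ̄(z) = μ((z,∞))`,
the left Marchaud-type derivative coincides with the Caputo-type expression:
`∫_0^∞ (u(x) − u(x+z)) dμ(z) = −∫_0^∞ u'(x+y) μ̄(y) dy = −∫_x^∞ u'(y) μ̄(y−x) dy`. -/
theorem marchaud_eq_caputo_type
    (μ : Measure ℝ)
    (hμ : ∫⁻ y in Ioi (0:ℝ), ENNReal.ofReal (min 1 y) ∂μ < ⊤)
    (u u' : ℝ → ℝ) (x : ℝ)
    (hud : ∀ y ∈ Ici x, HasDerivAt u (u' y) y)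
    (hint : IntegrableOn (fun y => |u' (x + y)| * (μ (Ioi y)).toReal) (Ioi 0)) :
    ∫ z in Ioi (0:ℝ), (u x - u (x + z)) ∂μ
        = -∫ y in Ioi (0:ℝ), u' (x + y) * (μ (Ioi y)).toReal ∧
    ∫ z in Ioi (0:ℝ), (u x - u (x + z)) ∂μ
        = -∫ y in Ioi x, u' y * (μ (Ioi (y - x))).toReal := by
  have hderiv : ∀ t : ℝ, x ≤ t → u' t = deriv u t := fun t ht => ((hud t ht).deriv).symm
  -- finiteness of the tail
  have hfin : ∀ y : ℝ, 0 < y → μ (Ioi y) ≠ ⊤ := by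
    intro y hy
    have hmin : (0:ℝ) < min 1 y := lt_min one_pos hy
    have h1 : ENNReal.ofReal (min 1 y) * μ (Ioi y)
        ≤ ∫⁻ z in Ioi (0:ℝ), ENNReal.ofReal (min 1 z) ∂μ := by
      calc ENNReal.ofReal (min 1 y) * μ (Ioi y)
          = ∫⁻ _ in Ioi y, ENNReal.ofReal (min 1 y) ∂μ := (setLIntegral_const _ _).symm
        _ ≤ ∫⁻ z in Ioi y, ENNReal.ofReal (min 1 z) ∂μ :=
            setLIntegral_mono (by fun_prop) (fun z hz =>
              ENNReal.ofReal_le_ofReal (min_le_min le_rfl (le_of_lt hz)))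
        _ ≤ ∫⁻ z in Ioi (0:ℝ), ENNReal.ofReal (min 1 z) ∂μ :=
            lintegral_mono_set (Ioi_subset_Ioi hy.le)
    intro htop
    rw [htop, ENNReal.mul_top (by simpa [ENNReal.ofReal_eq_zero, not_le] using hmin)] at h1
    exact absurd (h1.trans_lt hμ) (lt_irrefl _)
  set ν := μ.restrict (Ioi (0:ℝ)) with hνdef
  have hν_apply : ∀ y : ℝ, 0 < y → ν (Ioi y) = μ (Ioi y) := by
    intro y hy
    rw [hνdef, Measure.restrict_apply' measurableSet_Ioi,
      inter_eq_left.mpr (Ioi_subset_Ioi hy.le)]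
  haveI hsf : SigmaFinite ν := by
    constructor
    refine ⟨⟨fun n => Iic 0 ∪ Ioi (1/(n+1) : ℝ), fun _ => trivial, fun n => ?_, ?_⟩⟩
    · refine lt_of_le_of_lt (measure_union_le _ _) ?_
      have h1 : ν (Iic (0:ℝ)) = 0 := by
        rw [hνdef, Measure.restrict_apply' measurableSet_Ioi]
        have he : Iic (0:ℝ) ∩ Ioi 0 = ∅ := by
          ext t
          simp only [mem_inter_iff, mem_Iic, mem_Ioi, mem_empty_iff_false, iff_false, not_and,
            not_lt]
          exact id
        rw [he, measure_empty]
      have hpos : (0:ℝ) < 1/(n+1) := by positivity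
      have h2 : ν (Ioi (1/(n+1) : ℝ)) = μ (Ioi (1/(n+1) : ℝ)) := hν_apply _ hpos
      rw [h1, h2, zero_add]
      exact lt_top_iff_ne_top.mpr (hfin _ hpos)
    · ext r
      simp only [mem_iUnion, mem_union, mem_Iic, mem_Ioi, mem_univ, iff_true]
      rcases le_or_gt r 0 with h | h
      · exact ⟨0, Or.inl h⟩
      · obtain ⟨n, hn⟩ := exists_nat_one_div_lt h
        exact ⟨n, Or.inr hn⟩
  -- the kernel
  set f : ℝ → ℝ → ℝ := fun y z => if 0 < y ∧ y < z then u' (x + y) else 0 with hfdef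
  have hfz : ∀ z : ℝ, (fun y => f y z) = (Ioo 0 z).indicator (fun y => u' (x + y)) := by
    intro z
    funext y
    by_cases hy : 0 < y ∧ y < z
    · rw [Set.indicator_of_mem (mem_Ioo.mpr hy)]
      simp only [hfdef]
      exact if_pos hy
    · rw [Set.indicator_of_notMem (fun h => hy (mem_Ioo.mp h))]
      simp only [hfdef]
      exact if_neg hy
  have hfy : ∀ y : ℝ, 0 < y → (fun z => f y z) = (Ioi y).indicator (fun _ => u' (x + y)) := by
    intro y hy
    funext z
    by_cases hz : y < z
    · rw [Set.indicator_of_mem (mem_Ioi.mpr hz)]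
      simp only [hfdef]
      exact if_pos ⟨hy, hz⟩
    · rw [Set.indicator_of_notMem (fun h => hz (mem_Ioi.mp h))]
      simp only [hfdef]
      exact if_neg (fun h => hz h.2)
  have hfy0 : ∀ y : ℝ, ¬ 0 < y → (fun z => f y z) = fun _ => (0:ℝ) := by
    intro y hy
    funext z
    simp only [hfdef]
    exact if_neg (fun (h : 0 < y ∧ y < z) => hy h.1)
  have hset : MeasurableSet {p : ℝ × ℝ | 0 < p.1 ∧ p.1 < p.2} :=
    (measurableSet_lt measurable_const measurable_fst).inter
      (measurableSet_lt measurable_fst measurable_snd)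
  have huncurry : Function.uncurry f =
      Set.indicator {p : ℝ × ℝ | 0 < p.1 ∧ p.1 < p.2} (fun p => deriv u (x + p.1)) := by
    funext p
    by_cases hp : 0 < p.1 ∧ p.1 < p.2
    · rw [Set.indicator_of_mem (show p ∈ {p : ℝ × ℝ | 0 < p.1 ∧ p.1 < p.2} from hp)]
      simp only [Function.uncurry, hfdef]
      rw [if_pos hp]
      exact hderiv _ (by linarith [hp.1])
    · rw [Set.indicator_of_notMem (show p ∉ {p : ℝ × ℝ | 0 < p.1 ∧ p.1 < p.2} from hp)]
      simp only [Function.uncurry, hfdef]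
      exact if_neg hp
  have hmeasf : AEStronglyMeasurable (Function.uncurry f) (volume.prod ν) := by
    rw [huncurry]
    exact (((measurable_deriv u).comp
      (measurable_const.add measurable_fst)).indicator hset).aestronglyMeasurable
  -- finiteness of the double integral
  have hfint : Integrable (Function.uncurry f) (volume.prod ν) := by
    refine ⟨hmeasf, ?_⟩
    rw [hasFiniteIntegral_def, lintegral_prod _ hmeasf.enorm]
    have hinner : ∀ y : ℝ, (∫⁻ z, (‖f y z‖₊ : ENNReal) ∂ν)
        = (Ioi (0:ℝ)).indicator (fun y => ENNReal.ofReal |u' (x + y)| * μ (Ioi y)) y := by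
      intro y
      by_cases hy : 0 < y
      · have h1 : (fun z => (‖f y z‖₊ : ENNReal))
            = (Ioi y).indicator (fun _ => ENNReal.ofReal |u' (x + y)|) := by
          funext z
          have := congrFun (hfy y hy) z
          rw [this]
          by_cases hz : y < z
          · rw [Set.indicator_of_mem (mem_Ioi.mpr hz), Set.indicator_of_mem (mem_Ioi.mpr hz),
              ← Real.enorm_eq_ofReal_abs, enorm_eq_nnnorm]
          · rw [Set.indicator_of_notMem (fun h => hz (mem_Ioi.mp h)),
              Set.indicator_of_notMem (fun h => hz (mem_Ioi.mp h))]
            simp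
        rw [h1, lintegral_indicator measurableSet_Ioi, setLIntegral_const,
          Set.indicator_of_mem (mem_Ioi.mpr hy), hν_apply y hy]
      · have h1 : (fun z => (‖f y z‖₊ : ENNReal)) = fun _ => 0 := by
          funext z
          rw [congrFun (hfy0 y hy) z]
          simp
        rw [h1, lintegral_const, zero_mul, Set.indicator_of_notMem (by simpa using hy)]
    simp only [Function.uncurry_apply_pair, enorm_eq_nnnorm]
    simp_rw [hinner]
    rw [lintegral_indicator measurableSet_Ioi]
    have hfi := hint.hasFiniteIntegral
    rw [hasFiniteIntegral_def] at hfi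
    refine lt_of_le_of_lt (le_of_eq ?_) hfi
    refine setLIntegral_congr_fun measurableSet_Ioi (fun y hy => ?_)
    rw [Real.enorm_eq_ofReal_abs, abs_mul, abs_abs,
      abs_of_nonneg ENNReal.toReal_nonneg,
      ENNReal.ofReal_mul (abs_nonneg _), ENNReal.ofReal_toReal (hfin y hy)]
  -- swap
  have hswap : ∫ y : ℝ, (∫ z, f y z ∂ν) = ∫ z, (∫ y : ℝ, f y z) ∂ν :=
    integral_integral_swap hfint
  -- left side of swap equals the Caputo integral
  have hleft : ∫ y : ℝ, (∫ z, f y z ∂ν) = ∫ y in Ioi (0:ℝ), u' (x + y) * (μ (Ioi y)).toReal := by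
    have h1 : ∀ y : ℝ, (∫ z, f y z ∂ν)
        = (Ioi (0:ℝ)).indicator (fun y => u' (x + y) * (μ (Ioi y)).toReal) y := by
      intro y
      by_cases hy : 0 < y
      · rw [hfy y hy, integral_indicator_const _ measurableSet_Ioi,
          Set.indicator_of_mem (mem_Ioi.mpr hy), measureReal_def, hν_apply y hy, smul_eq_mul, mul_comm]
      · rw [hfy0 y hy, integral_zero, Set.indicator_of_notMem (by simpa using hy)]
    simp_rw [h1]
    rw [integral_indicator measurableSet_Ioi]
  -- inner integral on the right
  have hinner_right : ∀ z : ℝ, (∫ y : ℝ, f y z) = ∫ y in Ioo 0 z, u' (x + y) := by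
    intro z
    rw [hfz z, integral_indicator measurableSet_Ioo]
  -- a.e. FTC identity
  have hae : ∀ᵐ z ∂ν, u x - u (x + z) = -∫ y in Ioo 0 z, u' (x + y) := by
    have h1 : ∀ᵐ z ∂ν, Integrable (fun y => f y z) := hfint.prod_left_ae
    have h2 : ∀ᵐ z ∂ν, 0 < z := by
      rw [hνdef]; exact ae_restrict_mem measurableSet_Ioi
    filter_upwards [h1, h2] with z hz1 hz2
    have hI : IntegrableOn (fun y => u' (x + y)) (Ioo 0 z) := by
      rw [hfz z] at hz1
      exact (integrable_indicator_iff measurableSet_Ioo).mp hz1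
    have hftc : ∫ y in (0:ℝ)..z, u' (x + y)
        = (fun t => u (x + t)) z - (fun t => u (x + t)) 0 := by
      refine intervalIntegral.integral_eq_sub_of_hasDerivAt
        (f := fun t => u (x + t)) (f' := fun t => u' (x + t)) (fun t ht => ?_) ?_
      · rw [uIcc_of_le hz2.le] at ht
        have hxt : x ≤ x + t := by linarith [ht.1]
        have := (hud (x + t) hxt).comp t ((hasDerivAt_id t).const_add x)
        simpa [Function.comp_def] using this
      · exact (intervalIntegrable_iff_integrableOn_Ioo_of_le hz2.le).mpr hI
    simp only [add_zero] at hftc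
    rw [intervalIntegral.integral_of_le hz2.le, integral_Ioc_eq_integral_Ioo] at hftc
    linarith
  -- first equality
  have hmain : ∫ z in Ioi (0:ℝ), (u x - u (x + z)) ∂μ
      = -∫ y in Ioi (0:ℝ), u' (x + y) * (μ (Ioi y)).toReal := by
    calc ∫ z in Ioi (0:ℝ), (u x - u (x + z)) ∂μ
        = ∫ z, (u x - u (x + z)) ∂ν := rfl
      _ = ∫ z, (-∫ y in Ioo 0 z, u' (x + y)) ∂ν := integral_congr_ae hae
      _ = -∫ z, (∫ y in Ioo 0 z, u' (x + y)) ∂ν := integral_neg _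
      _ = -∫ z, (∫ y : ℝ, f y z) ∂ν := by simp_rw [hinner_right]
      _ = -∫ y : ℝ, (∫ z, f y z ∂ν) := by rw [hswap]
      _ = -∫ y in Ioi (0:ℝ), u' (x + y) * (μ (Ioi y)).toReal := by rw [hleft]
  refine ⟨hmain, ?_⟩
  rw [hmain]
  congr 1
  -- change of variables y ↦ x + y
  have h1 : ∫ y in Ioi x, u' y * (μ (Ioi (y - x))).toReal
      = ∫ y : ℝ, (Ioi x).indicator (fun y => u' y * (μ (Ioi (y - x))).toReal) y := by
    rw [integral_indicator measurableSet_Ioi]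
  rw [h1, ← integral_add_left_eq_self
    (fun y => (Ioi x).indicator (fun y => u' y * (μ (Ioi (y - x))).toReal) y) x]
  have h2 : (fun y : ℝ => (Ioi x).indicator (fun y => u' y * (μ (Ioi (y - x))).toReal) (x + y))
      = (Ioi (0:ℝ)).indicator (fun y => u' (x + y) * (μ (Ioi y)).toReal) := by
    funext y
    by_cases hy : 0 < y
    · rw [Set.indicator_of_mem (show x + y ∈ Ioi x by simpa using hy),
        Set.indicator_of_mem (mem_Ioi.mpr hy), add_sub_cancel_left]
    · rw [Set.indicator_of_notMem (show x + y ∉ Ioi x by simpa using hy),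
        Set.indicator_of_notMem (by simpa using hy)]
  rw [h2, integral_indicator measurableSet_Ioi]
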